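/- Let L : ℝ^d → ℝ^d be four times continuously differentiable, let w : ℝ → ℝ^d solve the autonomous ODE w'(t) = L(w(t)) with w(0) = w_0. For Δt > 0 define the intermediate state w*(Δt) = w_0 + (Δt/2)L(w_0) + (Δt²/8)·DL(w_0)(L(w_0)) and the update w⁺(Δt) = w_0 + Δt·L(w_0) + (Δt²/6)·DL(w_0)(L(w_0)) + (Δt²/3)·DL(w*(Δt))(L(w*(Δt))), where DL(w) denotes the Fréchet derivative of L at w. Then the one-step error satisfies ‖w⁺(Δt) − w(Δt)‖ = O(Δt⁵) as Δt → 0⁺; i.e., the two-stage method is fourth-order accurate. -/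

import Mathlib

open Asymptotics Filter Topology Set

private lemma iterDW_eq {E : Type*} [NormedAddCommGroup E] [NormedSpace ℝ E]
    {f : ℝ → E} {s : Set ℝ} (hs : UniqueDiffOn ℝ s) {n : ℕ}
    (hf : ∀ m : ℕ, m < n → Differentiable ℝ (iteratedDeriv m f)) :
    ∀ m ≤ n, ∀ x ∈ s, iteratedDerivWithin m f s x = iteratedDeriv m f x := by
  intro m
  induction m with
  | zero => intro _ x _; simp
  | succ k ih =>
    intro hm x hx
    rw [iteratedDerivWithin_succ, iteratedDeriv_succ,
      derivWithin_congr (fun y hy => ih (Nat.le_of_succ_le hm) y hy)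
        (ih (Nat.le_of_succ_le hm) x hx)]
    exact ((hf k (Nat.lt_of_succ_le hm)).differentiableAt.hasDerivAt).hasDerivWithinAt.derivWithin
      (hs x hx)

theorem two_stage_fourth_order_one_step_error
    (d : ℕ) (L : (Fin d → ℝ) → (Fin d → ℝ)) (hL : ContDiff ℝ 4 L)
    (w0 : Fin d → ℝ) (w : ℝ → (Fin d → ℝ))
    (hw : ∀ t, HasDerivAt w (L (w t)) t) (hw0 : w 0 = w0)
    (wstar wplus : ℝ → (Fin d → ℝ))
    (hwstar : ∀ Δt : ℝ,
      wstar Δt = w0 + (Δt / 2) • L w0 + (Δt ^ 2 / 8) • fderiv ℝ L w0 (L w0))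
    (hwplus : ∀ Δt : ℝ,
      wplus Δt = w0 + Δt • L w0 + (Δt ^ 2 / 6) • fderiv ℝ L w0 (L w0)
        + (Δt ^ 2 / 3) • fderiv ℝ L (wstar Δt) (L (wstar Δt))) :
    (fun Δt : ℝ => ‖wplus Δt - w Δt‖) =O[𝓝[>] (0 : ℝ)] fun Δt : ℝ => Δt ^ 5 := by
  classical
  set P : (Fin d → ℝ) → (Fin d → ℝ) := fun u => fderiv ℝ L u (L u) with hPdef
  have hPe : ∀ u, fderiv ℝ L u (L u) = P u := fun _ => rfl
  have hP3 : ContDiff ℝ 3 P :=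
    (hL.fderiv_right (by norm_num)).clm_apply (hL.of_le (by norm_num))
  have hwd : Differentiable ℝ w := fun t => (hw t).differentiableAt
  have hdw : deriv w = fun t => L (w t) := funext fun t => (hw t).deriv
  -- bootstrap: w is C⁵
  have hCstep : ∀ k : ℕ, k ≤ 4 → ContDiff ℝ k w → ContDiff ℝ (k + 1 : ℕ) w := by
    intro k hk hc
    have hcast : ((k + 1 : ℕ) : WithTop ℕ∞) = (k : WithTop ℕ∞) + 1 := by push_cast; rfl
    rw [hcast]
    refine contDiff_succ_iff_deriv.mpr ⟨hwd, ?_, ?_⟩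
    · intro hcon; simp at hcon
    · rw [hdw]
      exact (hL.of_le (by exact_mod_cast hk)).comp hc
  have hw5 : ContDiff ℝ 5 w := by
    have h0 : ContDiff ℝ 0 w := contDiff_zero.mpr hwd.continuous
    have h5 := hCstep 4 le_rfl (hCstep 3 (by norm_num) (hCstep 2 (by norm_num)
      (hCstep 1 (by norm_num) (hCstep 0 (by norm_num) h0))))
    exact_mod_cast h5
  set q : ℝ → (Fin d → ℝ) := fun t => P (w t) with hqdef
  have hqe : ∀ t, q t = P (w t) := fun _ => rfl
  have hq3 : ContDiff ℝ 3 q := hP3.comp (hw5.of_le (by norm_num))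
  have hdw2 : deriv (deriv w) = q := by
    rw [hdw]
    funext t
    exact ((hL.differentiable (by norm_num) (w t)).hasFDerivAt.comp_hasDerivAt t (hw t)).deriv
  have hIter2 : ∀ k : ℕ, iteratedDeriv (k + 2) w = iteratedDeriv k q := by
    intro k
    induction k with
    | zero =>
      show iteratedDeriv 2 w = iteratedDeriv 0 q
      rw [iteratedDeriv_succ, iteratedDeriv_one, hdw2, iteratedDeriv_zero]
    | succ k ih =>
      show iteratedDeriv (k + 2 + 1) w = iteratedDeriv (k + 1) q
      rw [iteratedDeriv_succ, ih, ← iteratedDeriv_succ]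
  have e0 : iteratedDeriv 0 w 0 = w0 := by simp [hw0]
  have e1 : iteratedDeriv 1 w 0 = L w0 := by rw [iteratedDeriv_one, hdw]; simp [hw0]
  have e2 : iteratedDeriv 2 w 0 = P w0 := by
    rw [show (2 : ℕ) = 0 + 2 from rfl, hIter2 0, iteratedDeriv_zero, hqe, hw0]
  have e3 : iteratedDeriv 3 w 0 = iteratedDeriv 1 q 0 := by
    rw [show (3 : ℕ) = 1 + 2 from rfl, hIter2 1]
  have e4 : iteratedDeriv 4 w 0 = iteratedDeriv 2 q 0 := by
    rw [show (4 : ℕ) = 2 + 2 from rfl, hIter2 2]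
  -- Lipschitz neighborhood for P around w0
  obtain ⟨K, U, hU, hKU⟩ := ((hP3.of_le (by norm_num)).contDiffAt (x := w0)).exists_lipschitzOnWith
  -- choose a small interval
  have hwstar_t : Tendsto wstar (𝓝 0) (𝓝 w0) := by
    have hfe : wstar = fun t : ℝ =>
        w0 + (t / 2) • L w0 + (t ^ 2 / 8) • fderiv ℝ L w0 (L w0) := funext hwstar
    rw [hfe]
    have hc : Continuous fun t : ℝ =>
        w0 + (t / 2) • L w0 + (t ^ 2 / 8) • fderiv ℝ L w0 (L w0) := by fun_prop
    simpa using hc.tendsto 0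
  have hwhalf_t : Tendsto (fun t : ℝ => w (t / 2)) (𝓝 0) (𝓝 w0) := by
    have := (hwd.continuous.comp (continuous_id.div_const 2)).tendsto 0
    simpa [Function.comp_def, hw0] using this
  have hUev : ∀ᶠ t in 𝓝 (0 : ℝ), wstar t ∈ U ∧ w (t / 2) ∈ U :=
    (hwstar_t.eventually_mem hU).and (hwhalf_t.eventually_mem hU)
  rw [Metric.eventually_nhds_iff] at hUev
  obtain ⟨δ, hδpos, hδ⟩ := hUev
  set b : ℝ := δ / 2 with hbdef
  have hbpos : 0 < b := by positivity
  have hmem : ∀ t ∈ Icc (0 : ℝ) b, wstar t ∈ U ∧ w (t / 2) ∈ U := by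
    intro t ht
    refine hδ ?_
    rw [Real.dist_eq, sub_zero, abs_of_nonneg ht.1]
    have := ht.2
    rw [hbdef] at this
    linarith
  have hudb : UniqueDiffOn ℝ (Icc (0 : ℝ) b) := uniqueDiffOn_Icc hbpos
  have h0m : (0 : ℝ) ∈ Icc (0 : ℝ) b := ⟨le_rfl, hbpos.le⟩
  have hW := iterDW_eq hudb (n := 5)
    (fun m hm => hw5.differentiable_iteratedDeriv m (by exact_mod_cast hm))
  have hQ := iterDW_eq hudb (n := 3)
    (fun m hm => hq3.differentiable_iteratedDeriv m (by exact_mod_cast hm))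
  have i0 : iteratedDerivWithin 0 w (Icc 0 b) 0 = w0 := (hW 0 (by norm_num) 0 h0m).trans e0
  have i1 : iteratedDerivWithin 1 w (Icc 0 b) 0 = L w0 := (hW 1 (by norm_num) 0 h0m).trans e1
  have i2 : iteratedDerivWithin 2 w (Icc 0 b) 0 = P w0 := (hW 2 (by norm_num) 0 h0m).trans e2
  have i3 : iteratedDerivWithin 3 w (Icc 0 b) 0 = iteratedDeriv 1 q 0 :=
    (hW 3 (by norm_num) 0 h0m).trans e3
  have i4 : iteratedDerivWithin 4 w (Icc 0 b) 0 = iteratedDeriv 2 q 0 :=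
    (hW 4 (by norm_num) 0 h0m).trans e4
  have j0 : iteratedDerivWithin 0 q (Icc 0 b) 0 = P w0 := by
    rw [hQ 0 (by norm_num) 0 h0m, iteratedDeriv_zero, hqe, hw0]
  have j1 : iteratedDerivWithin 1 q (Icc 0 b) 0 = iteratedDeriv 1 q 0 := hQ 1 (by norm_num) 0 h0m
  have j2 : iteratedDerivWithin 2 q (Icc 0 b) 0 = iteratedDeriv 2 q 0 := hQ 2 (by norm_num) 0 h0m
  -- Taylor remainder bounds
  obtain ⟨C1, hC1⟩ := exists_taylor_mean_remainder_bound (n := 4) hbpos.le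
    (by exact_mod_cast hw5.contDiffOn : ContDiffOn ℝ ((4 : ℕ) + 1) w (Icc 0 b))
  obtain ⟨C2, hC2⟩ := exists_taylor_mean_remainder_bound (n := 2) hbpos.le
    (by exact_mod_cast hq3.contDiffOn : ContDiffOn ℝ ((2 : ℕ) + 1) q (Icc 0 b))
  obtain ⟨C3, hC3⟩ := exists_taylor_mean_remainder_bound (n := 2) hbpos.le
    (by exact_mod_cast (hw5.of_le (by norm_num)).contDiffOn :
      ContDiffOn ℝ ((2 : ℕ) + 1) w (Icc 0 b))
  -- Taylor polynomial formulas
  have Tw4 : ∀ x : ℝ, taylorWithinEval w 4 (Icc 0 b) 0 x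
      = w0 + x • L w0 + (x ^ 2 / 2) • P w0 + (x ^ 3 / 6) • iteratedDeriv 1 q 0
        + (x ^ 4 / 24) • iteratedDeriv 2 q 0 := by
    intro x
    rw [taylor_within_apply]
    simp [Finset.sum_range_succ, i0, i1, i2, i3, i4, Nat.factorial]
    module
  have Tw2 : ∀ x : ℝ, taylorWithinEval w 2 (Icc 0 b) 0 x
      = w0 + x • L w0 + (x ^ 2 / 2) • P w0 := by
    intro x
    rw [taylor_within_apply]
    simp [Finset.sum_range_succ, i0, i1, i2, Nat.factorial]
    module
  have Th2 : ∀ x : ℝ, taylorWithinEval q 2 (Icc 0 b) 0 x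
      = P w0 + x • iteratedDeriv 1 q 0 + (x ^ 2 / 2) • iteratedDeriv 2 q 0 := by
    intro x
    rw [taylor_within_apply]
    simp [Finset.sum_range_succ, j0, j1, j2, Nat.factorial]
    module
  have hwstar_eq : ∀ t : ℝ, wstar t = taylorWithinEval w 2 (Icc 0 b) 0 (t / 2) := by
    intro t
    rw [hwstar t, Tw2, hPe]
    module
  -- key decomposition
  have decomp : ∀ t : ℝ, wplus t - w t =
      (t ^ 2 / 3) • (P (wstar t) - q (t / 2))
      + (t ^ 2 / 3) • (q (t / 2) - taylorWithinEval q 2 (Icc 0 b) 0 (t / 2))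
      + (taylorWithinEval w 4 (Icc 0 b) 0 t - w t) := by
    intro t
    rw [hwplus t, hPe, hPe, Th2, Tw4]
    module
  -- final estimate
  rw [isBigO_iff]
  refine ⟨(↑K * C3 + C2) / 24 + C1, ?_⟩
  filter_upwards [Ioc_mem_nhdsGT hbpos] with t ht
  obtain ⟨ht0, htb⟩ := ht
  have htI : t ∈ Icc (0 : ℝ) b := ⟨ht0.le, htb⟩
  have ht2I : t / 2 ∈ Icc (0 : ℝ) b := ⟨by linarith, by linarith⟩
  have hb1 : ‖P (wstar t) - q (t / 2)‖ ≤ ↑K * (C3 * (t / 2 - 0) ^ 3) := by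
    have hmem' := hmem t htI
    have lip : ‖P (wstar t) - P (w (t / 2))‖ ≤ ↑K * ‖wstar t - w (t / 2)‖ :=
      hKU.norm_sub_le hmem'.1 hmem'.2
    have tay : ‖w (t / 2) - wstar t‖ ≤ C3 * (t / 2 - 0) ^ 3 := by
      rw [hwstar_eq t]; exact hC3 (t / 2) ht2I
    rw [hqe]
    calc ‖P (wstar t) - P (w (t / 2))‖ ≤ ↑K * ‖wstar t - w (t / 2)‖ := lip
      _ ≤ ↑K * (C3 * (t / 2 - 0) ^ 3) := by
          refine mul_le_mul_of_nonneg_left ?_ K.2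
          rw [norm_sub_rev]; exact tay
  have hb2 : ‖q (t / 2) - taylorWithinEval q 2 (Icc 0 b) 0 (t / 2)‖
      ≤ C2 * (t / 2 - 0) ^ 3 := hC2 (t / 2) ht2I
  have hb3 : ‖taylorWithinEval w 4 (Icc 0 b) 0 t - w t‖ ≤ C1 * (t - 0) ^ 5 := by
    rw [norm_sub_rev]; exact hC1 t htI
  have hsm : ∀ v : Fin d → ℝ, ‖(t ^ 2 / 3) • v‖ = t ^ 2 / 3 * ‖v‖ := by
    intro v
    rw [norm_smul, Real.norm_eq_abs, abs_of_nonneg (by positivity)]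
  calc ‖‖wplus t - w t‖‖ = ‖wplus t - w t‖ := norm_norm _
    _ = ‖(t ^ 2 / 3) • (P (wstar t) - q (t / 2))
        + (t ^ 2 / 3) • (q (t / 2) - taylorWithinEval q 2 (Icc 0 b) 0 (t / 2))
        + (taylorWithinEval w 4 (Icc 0 b) 0 t - w t)‖ := by rw [decomp t]
    _ ≤ ‖(t ^ 2 / 3) • (P (wstar t) - q (t / 2))‖
        + ‖(t ^ 2 / 3) • (q (t / 2) - taylorWithinEval q 2 (Icc 0 b) 0 (t / 2))‖
        + ‖taylorWithinEval w 4 (Icc 0 b) 0 t - w t‖ := norm_add₃_le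
    _ ≤ t ^ 2 / 3 * (↑K * (C3 * (t / 2 - 0) ^ 3))
        + t ^ 2 / 3 * (C2 * (t / 2 - 0) ^ 3) + C1 * (t - 0) ^ 5 := by
        refine add_le_add (add_le_add ?_ ?_) hb3
        · rw [hsm]; exact mul_le_mul_of_nonneg_left hb1 (by positivity)
        · rw [hsm]; exact mul_le_mul_of_nonneg_left hb2 (by positivity)
    _ = ((↑K * C3 + C2) / 24 + C1) * t ^ 5 := by ring
    _ = ((↑K * C3 + C2) / 24 + C1) * ‖t ^ 5‖ := by
        rw [Real.norm_eq_abs, abs_of_nonneg (by positivity)]
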